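/- If s ~ t for nonempty schedules s and t, then executing s and t from the initial state q0 yields the same final state: the state (second) component of the last entry of σ*(s, q0) equals the state component of the last entry of σ*(t, q0). -/

import Mathlib

open Classical

universe u v w

/-- Operations `a` and `b` commute in state `q`. -/
def CommuteIn {Q : Type u} {O : Type v} {R : Type w}
    (σ : O → Q → R × Q) (a b : O) (q : Q) : Prop :=
  ∃ (ra rb : R) (q1 q2 q' : Q),
    σ a q = (ra, q1) ∧ σ b q1 = (rb, q') ∧ σ b q = (rb, q2) ∧ σ a q2 = (ra, q')

/-- Operations `a` and `b` conflict: they fail to commute in some state. -/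
def Conflict {Q : Type u} {O : Type v} {R : Type w}
    (σ : O → Q → R × Q) (a b : O) : Prop :=
  ∃ q : Q, ¬ CommuteIn σ a b q

/-- Position in `s` of the `i`-th (0-indexed) occurrence of `o`, if it exists. -/
noncomputable def occIdx {O : Type v} (s : List O) (o : O) (i : ℕ) : Option ℕ :=
  ((List.range s.length).filter (fun k => decide (s[k]? = some o)))[i]?

/-- The `i`-th occurrence of `a` precedes the `j`-th occurrence of `b` in `s`. -/
def Precedes {O : Type v} (s : List O) (a : O) (i : ℕ) (b : O) (j : ℕ) : Prop :=
  ∃ p q : ℕ, occIdx s a i = some p ∧ occIdx s b j = some q ∧ p < q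

/-- Schedule equivalence: same multiset of operations, and the relative order of
any two occurrences of conflicting operations is the same. -/
def ScheduleEquiv {Q : Type u} {O : Type v} {R : Type w}
    (σ : O → Q → R × Q) (s s' : List O) : Prop :=
  (↑s : Multiset O) = (↑s' : Multiset O) ∧
  ∀ (a b : O) (i j : ℕ), Conflict σ a b →
    (Precedes s a i b j ↔ Precedes s' a i b j)

/-- `~` is an equivalence relation (proved here to form the quotient). -/
def scheduleSetoid {Q : Type u} {O : Type v} {R : Type w}
    (σ : O → Q → R × Q) : Setoid (List O) :=
  ⟨ScheduleEquiv σ,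
    ⟨fun _ => ⟨rfl, fun _ _ _ _ _ => Iff.rfl⟩,
     fun h => ⟨h.1.symm, fun a b i j hc => (h.2 a b i j hc).symm⟩,
     fun h h' => ⟨h.1.trans h'.1, fun a b i j hc => (h.2 a b i j hc).trans (h'.2 a b i j hc)⟩⟩⟩

/-- Traces: equivalence classes of schedules. -/
def Trace {Q : Type u} {O : Type v} {R : Type w} (σ : O → Q → R × Q) :=
  Quotient (scheduleSetoid σ)

/-- Prefix order on traces. -/
def TraceLe {Q : Type u} {O : Type v} {R : Type w}
    (σ : O → Q → R × Q) (x y : Trace σ) : Prop :=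
  ∃ s u : List O, x = Quotient.mk (scheduleSetoid σ) s ∧
    y = Quotient.mk (scheduleSetoid σ) (s ++ u)

/-- Executing a schedule from state `q`. -/
def execTrace {Q : Type u} {O : Type v} {R : Type w}
    (σ : O → Q → R × Q) : List O → Q → List (R × Q)
  | [], _ => []
  | o :: s, q => (σ o q) :: execTrace σ s (σ o q).2

/-- Return value of the `i`-th (0-indexed) occurrence of `o` in `s`,
executed from the initial state `q0`. -/
noncomputable def retStar {Q : Type u} {O : Type v} {R : Type w}
    (σ : O → Q → R × Q) (q0 : Q) (o : O) (i : ℕ) (s : List O) : Option R :=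
  (occIdx s o i).bind fun k => ((execTrace σ s q0)[k]?).map Prod.fst

-- ==== auxiliary lemmas ====


noncomputable def pos {O : Type v} (s : List O) (o : O) : List ℕ :=
  (List.range s.length).filter (fun k => decide (s[k]? = some o))

lemma occIdx_eq {O : Type v} (s : List O) (o : O) (i : ℕ) :
    occIdx s o i = (pos s o)[i]? := rfl

lemma pos_cons {O : Type v} (x : O) (s : List O) (o : O) :
    pos (x :: s) o = (if x = o then [0] else []) ++ (pos s o).map (· + 1) := by
  unfold pos
  rw [List.length_cons, List.range_succ_eq_map, List.filter_cons, List.filter_map]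
  have h1 : ((fun k => decide ((x :: s)[k]? = some o)) ∘ Nat.succ)
      = (fun k => decide (s[k]? = some o)) := by funext k; simp
  have h2 : Nat.succ = (fun x : ℕ => x + 1) := by funext k; rfl
  rw [h1, h2]
  by_cases hx : x = o <;> simp [hx]

def fIns (L : ℕ) : ℕ → ℕ := fun k => if k < L then k else k + 1

lemma fIns_strictMono (L : ℕ) : StrictMono (fIns L) := by
  intro p q hpq
  unfold fIns
  by_cases hp : p < L <;> by_cases hq : q < L <;> simp [hp, hq] <;> omega

lemma fIns_succ (L k : ℕ) : fIns (L + 1) (k + 1) = fIns L k + 1 := by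
  unfold fIns; by_cases h : k < L <;> simp [h] <;> omega

lemma pos_insert {O : Type v} (u v : List O) (b : O) (hb : b ∉ u) :
    (∀ o : O, o ≠ b → pos (u ++ b :: v) o = (pos (u ++ v) o).map (fIns u.length)) ∧
    pos (u ++ b :: v) b = u.length :: (pos (u ++ v) b).map (fIns u.length) := by
  induction u with
  | nil =>
    constructor
    · intro o ho
      simp only [List.nil_append, pos_cons, List.length_nil]
      have : (fun x => x + 1) = fIns 0 := by funext k; simp [fIns]
      simp [Ne.symm ho, this]
    · simp only [List.nil_append, pos_cons, List.length_nil]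
      have : (fun x => x + 1) = fIns 0 := by funext k; simp [fIns]
      simp [this]
  | cons x u ih =>
    have hxb : x ≠ b := fun h => hb (h ▸ List.mem_cons_self (a := x) (l := u))
    have hbu : b ∉ u := fun h => hb (List.mem_cons_of_mem x h)
    obtain ⟨ih1, ih2⟩ := ih hbu
    have hmap : ∀ l : List ℕ, (l.map (fIns u.length)).map (· + 1)
        = (l.map (· + 1)).map (fIns (u.length + 1)) := by
      intro l
      rw [List.map_map, List.map_map]
      congr 1; funext k; simp [Function.comp, fIns_succ]
    constructor
    · intro o ho
      rw [List.cons_append, pos_cons, ih1 o ho, List.cons_append, pos_cons]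
      rw [List.map_append, hmap]
      congr 1
      by_cases hx : x = o <;> simp [hx, List.length_cons, fIns]
    · rw [List.cons_append, pos_cons, ih2, List.cons_append, pos_cons]
      simp only [hxb, if_neg, List.nil_append, List.map_cons, List.map_append]
      rw [hmap]
      simp [List.length_cons, fIns]

lemma precedes_iff_of_map {O : Type v} (s s' : List O) (f : ℕ → ℕ) (hf : StrictMono f)
    (a : O) (i i' : ℕ) (c : O) (j j' : ℕ)
    (ha : occIdx s a i = (occIdx s' a i').map f)
    (hc : occIdx s c j = (occIdx s' c j').map f) :
    Precedes s a i c j ↔ Precedes s' a i' c j' := by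
  constructor
  · rintro ⟨p, q, hp, hq, hlt⟩
    rw [ha] at hp; rw [hc] at hq
    obtain ⟨p', hp', rfl⟩ := Option.map_eq_some_iff.mp hp
    obtain ⟨q', hq', rfl⟩ := Option.map_eq_some_iff.mp hq
    exact ⟨p', q', hp', hq', hf.lt_iff_lt.mp hlt⟩
  · rintro ⟨p, q, hp, hq, hlt⟩
    exact ⟨f p, f q, by rw [ha, hp]; rfl, by rw [hc, hq]; rfl, hf hlt⟩

section Main
variable {Q : Type u} {O : Type v} {R : Type w} (σ : O → Q → R × Q)

lemma scheduleEquiv_tail (u v t' : List O) (b : O) (hb : b ∉ u)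
    (h : ScheduleEquiv σ (u ++ b :: v) (b :: t')) :
    ScheduleEquiv σ (u ++ v) t' := by
  obtain ⟨hm, hp⟩ := h
  constructor
  · have : (↑(u ++ b :: v) : Multiset O) = b ::ₘ (↑(u ++ v) : Multiset O) := by
      simp [Multiset.cons_swap]
    rw [this] at hm
    have ht : (↑(b :: t') : Multiset O) = b ::ₘ (↑t' : Multiset O) := by simp
    rw [ht] at hm
    exact (Multiset.cons_inj_right b).mp hm
  · intro a c i j hconf
    have key_s : ∀ (o : O) (i : ℕ),
        occIdx (u ++ b :: v) o (if o = b then i + 1 else i)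
          = (occIdx (u ++ v) o i).map (fIns u.length) := by
      intro o i
      by_cases ho : o = b
      · subst ho
        have hif : (if o = o then i + 1 else i) = i + 1 := if_pos rfl
        rw [hif, occIdx_eq, occIdx_eq, (pos_insert u v o hb).2,
          List.getElem?_cons_succ, List.getElem?_map]
      · simp only [if_neg ho, occIdx_eq, (pos_insert u v b hb).1 o ho, List.getElem?_map]
    have key_t : ∀ (o : O) (i : ℕ),
        occIdx (b :: t') o (if o = b then i + 1 else i)
          = (occIdx t' o i).map (· + 1) := by
      intro o i
      by_cases ho : o = b
      · subst ho
        have hif : (if o = o then i + 1 else i) = i + 1 := if_pos rfl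
        rw [hif, occIdx_eq, occIdx_eq, pos_cons, if_pos rfl]
        simp only [List.cons_append, List.nil_append, List.getElem?_cons_succ,
          List.getElem?_map]
      · simp only [if_neg ho, occIdx_eq, pos_cons, if_neg (Ne.symm ho : b ≠ o),
          List.nil_append, List.getElem?_map]
    have hmono : StrictMono (fun k : ℕ => k + 1) := fun p q h => Nat.add_lt_add_right h 1
    calc Precedes (u ++ v) a i c j
        ↔ Precedes (u ++ b :: v) a (if a = b then i + 1 else i) c (if c = b then j + 1 else j) :=
          (precedes_iff_of_map _ _ _ (fIns_strictMono u.length) a _ i c _ j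
            (key_s a i) (key_s c j)).symm
      _ ↔ Precedes (b :: t') a (if a = b then i + 1 else i) c (if c = b then j + 1 else j) :=
          hp a c _ _ hconf
      _ ↔ Precedes t' a i c j :=
          precedes_iff_of_map _ _ _ hmono a _ i c _ j (key_t a i) (key_t c j)

lemma no_conflict_of_head (u v t' : List O) (b : O) (hb : b ∉ u)
    (h : ScheduleEquiv σ (u ++ b :: v) (b :: t')) :
    ∀ a ∈ u, ¬ Conflict σ a b := by
  intro a ha hconf
  obtain ⟨p, hplen, hpa⟩ := List.mem_iff_getElem.mp ha
  have hpa' : (u ++ b :: v)[p]? = some a := by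
    rw [List.getElem?_append_left hplen, List.getElem?_eq_getElem hplen, hpa]
  have hpmem : p ∈ pos (u ++ b :: v) a := by
    simp only [pos, List.mem_filter, List.mem_range, List.length_append, List.length_cons]
    exact ⟨by omega, by simp [hpa']⟩
  obtain ⟨i, hi⟩ := List.mem_iff_getElem?.mp hpmem
  have hb0 : occIdx (u ++ b :: v) b 0 = some u.length := by
    rw [occIdx_eq, (pos_insert u v b hb).2]; simp
  have hPs : Precedes (u ++ b :: v) a i b 0 :=
    ⟨p, u.length, by rw [occIdx_eq]; exact hi, hb0, hplen⟩
  have hPt := (h.2 a b i 0 hconf).mp hPs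
  obtain ⟨p', q', _, hq', hlt⟩ := hPt
  have h0 : occIdx (b :: t') b 0 = some 0 := by
    rw [occIdx_eq, pos_cons, if_pos rfl]; simp
  rw [h0] at hq'
  have : q' = 0 := (Option.some_injective _ hq').symm
  omega

end Main

section Main2
variable {Q : Type u} {O : Type v} {R : Type w} (σ : O → Q → R × Q)

lemma exists_split (b : O) (s : List O) (hbs : b ∈ s) :
    ∃ u v, s = u ++ b :: v ∧ b ∉ u := by
  induction s with
  | nil => cases hbs
  | cons x s ih =>
    by_cases hx : x = b
    · exact ⟨[], s, by rw [hx]; rfl, by simp⟩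
    · have hb' : b ∈ s := by
        rcases List.mem_cons.mp hbs with h | h
        · exact absurd h.symm hx
        · exact h
      obtain ⟨u, v, h1, h2⟩ := ih hb'
      exact ⟨x :: u, v, by rw [h1]; rfl, by
        intro hmem
        rcases List.mem_cons.mp hmem with h | h
        · exact hx h.symm
        · exact h2 h⟩

lemma swap_of_not_conflict {a b : O} (h : ¬ Conflict σ a b) (q : Q) :
    (σ b (σ a q).2).2 = (σ a (σ b q).2).2 := by
  have hc : ∀ q, CommuteIn σ a b q := not_exists_not.mp h
  obtain ⟨ra, rb, q1, q2, q', h1, h2, h3, h4⟩ := hc q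
  rw [h1, h3]
  simp only [h2, h4]

lemma foldl_insert (u v : List O) (b : O) (q : Q)
    (hc : ∀ a ∈ u, ∀ q : Q, (σ b (σ a q).2).2 = (σ a (σ b q).2).2) :
    List.foldl (fun q o => (σ o q).2) q (u ++ b :: v) =
    List.foldl (fun q o => (σ o q).2) ((σ b q).2) (u ++ v) := by
  induction u generalizing q with
  | nil => simp
  | cons x u ih =>
    simp only [List.cons_append, List.foldl_cons]
    rw [ih (σ x q).2 (fun a ha q => hc a (List.mem_cons_of_mem x ha) q),
      hc x (List.mem_cons_self (a := x) (l := u)) q]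

lemma foldl_eq_of_scheduleEquiv :
    ∀ (n : ℕ) (s t : List O) (q : Q), s.length ≤ n → ScheduleEquiv σ s t →
      List.foldl (fun q o => (σ o q).2) q s = List.foldl (fun q o => (σ o q).2) q t := by
  intro n
  induction n with
  | zero =>
    intro s t q hlen h
    have hs : s = [] := List.length_eq_zero_iff.mp (Nat.le_zero.mp hlen)
    subst hs
    have : (↑t : Multiset O) = 0 := by rw [← h.1]; rfl
    have ht : t = [] := by simpa using this
    rw [ht]
  | succ n ih =>
    intro s t q hlen h
    cases t with
    | nil =>
      have : (↑s : Multiset O) = 0 := by rw [h.1]; rfl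
      have hs : s = [] := by simpa using this
      rw [hs]
    | cons b t' =>
      have hbs : b ∈ s := by
        have : b ∈ (↑s : Multiset O) := by rw [h.1]; simp
        simpa using this
      obtain ⟨u, v, rfl, hbu⟩ := exists_split b s hbs
      rw [foldl_insert σ u v b q (fun a ha q =>
        swap_of_not_conflict σ (no_conflict_of_head σ u v t' b hbu h a ha) q)]
      have hequiv := scheduleEquiv_tail σ u v t' b hbu h
      have hlen' : (u ++ v).length ≤ n := by
        simp only [List.length_append, List.length_cons] at hlen ⊢
        omega
      rw [List.foldl_cons]
      exact ih (u ++ v) t' (σ b q).2 hlen' hequiv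

lemma execTrace_ne_nil (s : List O) (q : Q) (hs : s ≠ []) : execTrace σ s q ≠ [] := by
  cases s with
  | nil => exact absurd rfl hs
  | cons o s => simp [execTrace]

lemma execTrace_last (s : List O) (q : Q) (hs : s ≠ []) :
    ((execTrace σ s q).getLast?).map Prod.snd =
      some (List.foldl (fun q o => (σ o q).2) q s) := by
  induction s generalizing q with
  | nil => exact absurd rfl hs
  | cons o s ih =>
    cases s with
    | nil => simp [execTrace]
    | cons o' s' =>
      have h1 : execTrace σ (o :: o' :: s') q
          = σ o q :: σ o' (σ o q).2 :: execTrace σ s' (σ o' (σ o q).2).2 := rfl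
      rw [h1, List.getLast?_cons_cons]
      have h2 : σ o' (σ o q).2 :: execTrace σ s' (σ o' (σ o q).2).2
          = execTrace σ (o' :: s') (σ o q).2 := rfl
      rw [h2, ih (σ o q).2 (by simp)]
      rfl

theorem finalState_eq_of_scheduleEquiv'
    (q0 : Q) (s t : List O)
    (h : ScheduleEquiv σ s t) (hs : s ≠ []) (ht : t ≠ []) :
    ((execTrace σ s q0).getLast?).map Prod.snd =
      ((execTrace σ t q0).getLast?).map Prod.snd := by
  rw [execTrace_last σ s q0 hs, execTrace_last σ t q0 ht,
    foldl_eq_of_scheduleEquiv σ s.length s t q0 le_rfl h]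

end Main2

/-- equivalent nonempty schedules executed from the initial state
`q0` reach the same final state. -/
theorem finalState_eq_of_scheduleEquiv
    {Q : Type u} {O : Type v} {R : Type w}
    (σ : O → Q → R × Q) (q0 : Q) (s t : List O)
    (h : ScheduleEquiv σ s t) (hs : s ≠ []) (ht : t ≠ []) :
    ((execTrace σ s q0).getLast?).map Prod.snd =
      ((execTrace σ t q0).getLast?).map Prod.snd := by
  exact finalState_eq_of_scheduleEquiv' σ q0 s t h hs ht
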